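/- In the space of triples of vectors in R^3 with the Poisson bracket determined by {x_i,y_i}=z_i, {y_i,z_i}=x_i, {z_i,x_i}=y_i on each copy (and coordinates of different copies Poisson-commuting), the Hamiltonians Δ_{ij} = x_i x_j + y_i y_j + z_i z_j satisfy the Kohno relations: {Δ_{ij}, Δ_{kl}} = 0 when i,j,k,l are pairwise distinct, and {Δ_{ij}, Δ_{ik} + Δ_{jk}} = 0 for distinct i,j,k. -/

import Mathlib

open scoped BigOperators

namespace Stmt0

variable (n : ℕ)

/-- The phase space: `n` copies of `ℝ³`, a point assigns to each index `i : Fin n`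
a vector `p i : Fin 3 → ℝ` with coordinates `x_i = p i 0`, `y_i = p i 1`, `z_i = p i 2`. -/
abbrev V (n : ℕ) := Fin n → Fin 3 → ℝ

/-- Standard basis vector of `V n` at position `(i, a)`. -/
def e (i : Fin n) (a : Fin 3) : V n := fun j b => if j = i ∧ b = a then 1 else 0

/-- Partial derivative of a function along the coordinate `(i, a)`. -/
noncomputable def D (i : Fin n) (a : Fin 3) (f : V n → ℝ) (p : V n) : ℝ :=
  fderiv ℝ f p (e n i a)

/-- The Poisson bracket on smooth functions on `(ℝ³)^n` determined by
`{x_i, y_i} = z_i`, `{y_i, z_i} = x_i`, `{z_i, x_i} = y_i` on each copy,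
coordinates of different copies commuting. -/
noncomputable def bracket (f g : V n → ℝ) (p : V n) : ℝ :=
  ∑ i : Fin n,
    (p i 2 * (D n i 0 f p * D n i 1 g p - D n i 1 f p * D n i 0 g p)
   + p i 0 * (D n i 1 f p * D n i 2 g p - D n i 2 f p * D n i 1 g p)
   + p i 1 * (D n i 2 f p * D n i 0 g p - D n i 0 f p * D n i 2 g p))

/-- The Hamiltonian `Δ_{ij} = ⟨r_i, r_j⟩ = x_i x_j + y_i y_j + z_i z_j`. -/
def Δ (i j : Fin n) (p : V n) : ℝ := ∑ a : Fin 3, p i a * p j a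


/-- The coordinate evaluation `p ↦ p i b` as a continuous linear map. -/
noncomputable def L (i : Fin n) (b : Fin 3) : V n →L[ℝ] ℝ :=
  ((ContinuousLinearMap.proj b : (Fin 3 → ℝ) →L[ℝ] ℝ)).comp
    ((ContinuousLinearMap.proj i : V n →L[ℝ] (Fin 3 → ℝ)))

lemma hasFDerivAt_coord (i : Fin n) (b : Fin 3) (p : V n) :
    HasFDerivAt (fun q : V n => q i b) (L n i b) p :=
  (L n i b).hasFDerivAt

lemma hasFDerivAt_Δ (i j : Fin n) (p : V n) :
    HasFDerivAt (Δ n i j)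
      (∑ b : Fin 3, (p i b • L n j b + p j b • L n i b)) p := by
  have : ∀ b ∈ Finset.univ, HasFDerivAt (fun q : V n => q i b * q j b)
      (p i b • L n j b + p j b • L n i b) p := fun b _ =>
    HasFDerivAt.mul (hasFDerivAt_coord n i b p) (hasFDerivAt_coord n j b p)
  exact HasFDerivAt.sum this

lemma D_Δ (m : Fin n) (a : Fin 3) (i j : Fin n) (p : V n) :
    D n m a (Δ n i j) p
      = (if i = m then p j a else 0) + (if j = m then p i a else 0) := by
  unfold D
  rw [(hasFDerivAt_Δ n i j p).fderiv]
  simp only [ContinuousLinearMap.sum_apply, ContinuousLinearMap.add_apply,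
    ContinuousLinearMap.smul_apply, L, ContinuousLinearMap.comp_apply,
    ContinuousLinearMap.proj_apply, e, smul_eq_mul]
  have h : ∀ (u v : Fin n), ∀ b : Fin 3,
      (if (u : Fin n) = v ∧ b = a then (1:ℝ) else 0)
        = (if v = u then 1 else 0) * (if b = a then 1 else 0) := by
    intro u v b
    by_cases h1 : u = v <;> by_cases h2 : b = a <;> simp [h1, h2, eq_comm]
  simp only [h]
  rw [Finset.sum_add_distrib]
  simp [Finset.mul_sum, mul_ite, Finset.sum_ite_eq', mul_comm, mul_assoc]
  by_cases h1 : i = m <;> by_cases h2 : j = m <;> simp_all [eq_comm]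

lemma D_Δ_add (m : Fin n) (a : Fin 3) (i k j : Fin n) (p : V n) :
    D n m a (fun q => Δ n i k q + Δ n j k q) p
      = D n m a (Δ n i k) p + D n m a (Δ n j k) p := by
  unfold D
  rw [((hasFDerivAt_Δ n i k p).fun_add (hasFDerivAt_Δ n j k p)).fderiv,
    (hasFDerivAt_Δ n i k p).fderiv, (hasFDerivAt_Δ n j k p).fderiv]
  simp

/-- The Klyachko Hamiltonians `Δ_{ij} = x_i x_j + y_i y_j + z_i z_j` on `(ℝ³)^n` satisfy the
Kohno relations with respect to the Poisson bracket. -/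
theorem klyachko_hamiltonians_satisfy_kohno_relations
    (i j k l : Fin n)
    (hij : i ≠ j) (hik : i ≠ k) (hil : i ≠ l) (hjk : j ≠ k) (hjl : j ≠ l) (hkl : k ≠ l) :
    (∀ p : V n, bracket n (Δ n i j) (Δ n k l) p = 0) ∧
    (∀ p : V n, bracket n (Δ n i j) (fun q => Δ n i k q + Δ n j k q) p = 0) := by
  constructor
  · intro p
    unfold bracket
    apply Finset.sum_eq_zero
    intro m _
    simp only [D_Δ]
    by_cases h1 : i = m <;> by_cases h2 : j = m <;> by_cases h3 : k = m <;>
      by_cases h4 : l = m <;> simp_all <;> ring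
  · intro p
    unfold bracket
    simp only [D_Δ_add, D_Δ]
    set c : ℝ := p i 2 * (p j 0 * p k 1 - p j 1 * p k 0)
      + p i 0 * (p j 1 * p k 2 - p j 2 * p k 1)
      + p i 1 * (p j 2 * p k 0 - p j 0 * p k 2) with hc
    rw [Finset.sum_congr rfl (g := fun m =>
        (if i = m then c else 0) + (if j = m then -c else 0))
      (fun m _ => by
        by_cases h1 : i = m <;> by_cases h2 : j = m <;> by_cases h3 : k = m <;>
          simp_all <;> ring)]
    rw [Finset.sum_add_distrib, Finset.sum_ite_eq, Finset.sum_ite_eq]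
    simp

end Stmt0
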